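/- Let 𝒜 be a graded algebra over ℂ and f = (f_t)_{t≥1} an automorphism of 𝒜 (each f_t : 𝒜_t → 𝒜_t invertible linear and f_{s+t}(xy) = f_s(x) f_t(y) for all x ∈ 𝒜_s, y ∈ 𝒜_t). If 𝒜 satisfies condition (5.2), then for all r, s, t ∈ {1,2,…}: Ker( M_{r,s,t} ∘ (1_{𝒜_r} ⊗ f_s^r ⊗ f_t^{r+s}) ) = Ker( M_{r,s} ∘ (1_{𝒜_r} ⊗ f_s^r) ) ⊗ 𝒜_t + 𝒜_r ⊗ Ker( M_{s,t} ∘ (1_{𝒜_s} ⊗ f_t^s) ), where f_t^s denotes f_t iterated s times; that is, the twisted graded algebra 𝒜^{(f)} also satisfies condition (5.2). -/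

import Mathlib

open TensorProduct

private lemma pow_toLinearMap' {M : Type*} [AddCommGroup M] [Module ℂ M]
    (e : M ≃ₗ[ℂ] M) (n : ℕ) : (e ^ n).toLinearMap = e.toLinearMap ^ n := by
  ext x
  simp [LinearEquiv.pow_apply, Module.End.pow_apply]

private lemma map_range_mapIncl' {M N P Q : Type*} [AddCommGroup M] [Module ℂ M]
    [AddCommGroup N] [Module ℂ N] [AddCommGroup P] [Module ℂ P] [AddCommGroup Q] [Module ℂ Q]
    (F : M →ₗ[ℂ] P) (G : N →ₗ[ℂ] Q) (p : Submodule ℂ M) (q : Submodule ℂ N) :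
    Submodule.map (TensorProduct.map F G) (LinearMap.range (mapIncl p q)) =
      LinearMap.range (mapIncl (p.map F) (q.map G)) := by
  rw [range_mapIncl, range_mapIncl, Submodule.map₂_eq_span_image2,
    Submodule.map₂_eq_span_image2, Submodule.map_span]
  congr 1
  rw [Set.image_image2, Submodule.map_coe, Submodule.map_coe,
    Set.image2_image_left, Set.image2_image_right]
  simp [TensorProduct.map_tmul]

section Graded

variable (A : ℕ → Type*) [∀ t, AddCommGroup (A t)] [∀ t, Module ℂ (A t)]
variable (mul : ∀ s t : ℕ, A s →ₗ[ℂ] A t →ₗ[ℂ] A (s + t))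

/-- The multiplication map `M_{s,t} : 𝒜_s ⊗ 𝒜_t → 𝒜_{s+t}`. -/
noncomputable def M2 (s t : ℕ) : (A s ⊗[ℂ] A t) →ₗ[ℂ] A (s + t) :=
  TensorProduct.lift (mul s t)

/-- The multiplication map `M_{r,s,t} : (𝒜_r ⊗ 𝒜_s) ⊗ 𝒜_t → 𝒜_{r+s+t}`. -/
noncomputable def M3 (r s t : ℕ) : ((A r ⊗[ℂ] A s) ⊗[ℂ] A t) →ₗ[ℂ] A (r + s + t) :=
  (M2 A mul (r + s) t).comp (TensorProduct.map (M2 A mul r s) LinearMap.id)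

/-- Associativity of the graded multiplication. -/
def GradedAssoc : Prop :=
  ∀ (r s t : ℕ) (x : A r) (y : A s) (z : A t),
    HEq (mul (r + s) t (mul r s x y) z) (mul r (s + t) x (mul s t y z))

/-- Condition (5.2): `Ker M_{r,s,t} = (Ker M_{r,s}) ⊗ 𝒜_t + 𝒜_r ⊗ (Ker M_{s,t})`
for all positive `r`, `s`, `t`. -/
def Cond52 : Prop :=
  ∀ r s t : ℕ, 1 ≤ r → 1 ≤ s → 1 ≤ t →
    LinearMap.ker (M3 A mul r s t) =
      LinearMap.range (TensorProduct.mapIncl (LinearMap.ker (M2 A mul r s))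
          (⊤ : Submodule ℂ (A t))) ⊔
        Submodule.map (TensorProduct.assoc ℂ (A r) (A s) (A t)).symm.toLinearMap
          (LinearMap.range (TensorProduct.mapIncl (⊤ : Submodule ℂ (A r))
            (LinearMap.ker (M2 A mul s t))))

/-- Condition (5.3): `M_{s,t}` is surjective for all positive `s`, `t`. -/
def Cond53 : Prop :=
  ∀ s t : ℕ, 1 ≤ s → 1 ≤ t → Function.Surjective (M2 A mul s t)


end Graded

-- pow multiplicativity
private lemma hf_pow {A : ℕ → Type*} [∀ t, AddCommGroup (A t)] [∀ t, Module ℂ (A t)]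
    (mul : ∀ s t : ℕ, A s →ₗ[ℂ] A t →ₗ[ℂ] A (s + t)) (f : ∀ t, A t ≃ₗ[ℂ] A t)
    (hf : ∀ s t : ℕ, 1 ≤ s → 1 ≤ t → ∀ (x : A s) (y : A t),
      f (s + t) (mul s t x y) = mul s t (f s x) (f t y))
    (s t : ℕ) (hs : 1 ≤ s) (ht : 1 ≤ t) (n : ℕ) (x : A s) (y : A t) :
    ((f (s + t)).toLinearMap ^ n) (mul s t x y) =
      mul s t (((f s).toLinearMap ^ n) x) (((f t).toLinearMap ^ n) y) := by
  induction n with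
  | zero => simp
  | succ n ih =>
    simp only [pow_succ', Module.End.mul_apply, LinearEquiv.coe_coe]
    rw [ih]
    exact hf s t hs ht _ _

-- kernel invariance under the diagonal twist
private lemma ker_twist {A : ℕ → Type*} [∀ t, AddCommGroup (A t)] [∀ t, Module ℂ (A t)]
    (mul : ∀ s t : ℕ, A s →ₗ[ℂ] A t →ₗ[ℂ] A (s + t)) (f : ∀ t, A t ≃ₗ[ℂ] A t)
    (hf : ∀ s t : ℕ, 1 ≤ s → 1 ≤ t → ∀ (x : A s) (y : A t),
      f (s + t) (mul s t x y) = mul s t (f s x) (f t y))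
    (s t : ℕ) (hs : 1 ≤ s) (ht : 1 ≤ t) (n m : ℕ) :
    LinearMap.ker ((M2 A mul s t).comp
        (TensorProduct.map ((f s).toLinearMap ^ n) ((f t).toLinearMap ^ (n + m)))) =
      LinearMap.ker ((M2 A mul s t).comp
        (TensorProduct.map LinearMap.id ((f t).toLinearMap ^ m))) := by
  have hcomp : (M2 A mul s t).comp
      (TensorProduct.map ((f s).toLinearMap ^ n) ((f t).toLinearMap ^ (n + m))) =
      ((f (s + t)).toLinearMap ^ n).comp
        ((M2 A mul s t).comp (TensorProduct.map LinearMap.id ((f t).toLinearMap ^ m))) := by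
    apply TensorProduct.ext'
    intro x y
    simp only [LinearMap.comp_apply, TensorProduct.map_tmul, LinearMap.id_coe, id_eq]
    rw [pow_add, Module.End.mul_apply]
    exact (hf_pow mul f hf s t hs ht n x _).symm
  rw [hcomp]
  apply LinearMap.ker_comp_of_ker_eq_bot
  rw [← pow_toLinearMap']
  exact LinearEquiv.ker _


theorem stmt_16 (A : ℕ → Type*) [∀ t, AddCommGroup (A t)] [∀ t, Module ℂ (A t)]
    (mul : ∀ s t : ℕ, A s →ₗ[ℂ] A t →ₗ[ℂ] A (s + t)) (hassoc : GradedAssoc A mul)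
    (f : ∀ t, A t ≃ₗ[ℂ] A t)
    (hf : ∀ s t : ℕ, 1 ≤ s → 1 ≤ t → ∀ (x : A s) (y : A t),
      f (s + t) (mul s t x y) = mul s t (f s x) (f t y))
    (h52 : Cond52 A mul) :
    ∀ r s t : ℕ, 1 ≤ r → 1 ≤ s → 1 ≤ t →
      LinearMap.ker
          ((M3 A mul r s t).comp
            (TensorProduct.map
              (TensorProduct.map LinearMap.id ((f s).toLinearMap ^ r))
              ((f t).toLinearMap ^ (r + s)))) =
        LinearMap.range (TensorProduct.mapIncl
            (LinearMap.ker ((M2 A mul r s).comp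
              (TensorProduct.map LinearMap.id ((f s).toLinearMap ^ r))))
            (⊤ : Submodule ℂ (A t))) ⊔
          Submodule.map (TensorProduct.assoc ℂ (A r) (A s) (A t)).symm.toLinearMap
            (LinearMap.range (TensorProduct.mapIncl (⊤ : Submodule ℂ (A r))
              (LinearMap.ker ((M2 A mul s t).comp
                (TensorProduct.map LinearMap.id ((f t).toLinearMap ^ s)))))) := by
  intro r s t hr hs ht
  set E2 : A s ≃ₗ[ℂ] A s := (f s) ^ r with hE2
  set E3 : A t ≃ₗ[ℂ] A t := (f t) ^ (r + s) with hE3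
  have hg : (f s).toLinearMap ^ r = E2.toLinearMap := (pow_toLinearMap' (f s) r).symm
  have hh : (f t).toLinearMap ^ (r + s) = E3.toLinearMap := (pow_toLinearMap' (f t) (r + s)).symm
  set Φ : ((A r ⊗[ℂ] A s) ⊗[ℂ] A t) ≃ₗ[ℂ] ((A r ⊗[ℂ] A s) ⊗[ℂ] A t) :=
    TensorProduct.congr (TensorProduct.congr (LinearEquiv.refl ℂ (A r)) E2) E3 with hΦ
  have hΦmap : (TensorProduct.map
      (TensorProduct.map (LinearMap.id : A r →ₗ[ℂ] A r) ((f s).toLinearMap ^ r))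
      ((f t).toLinearMap ^ (r + s))) = Φ.toLinearMap := by
    rw [hg, hh]; rfl
  rw [hΦmap, LinearMap.ker_comp, Submodule.comap_equiv_eq_map_symm,
    h52 r s t hr hs ht, Submodule.map_sup]
  have hΦsymm : Φ.symm.toLinearMap =
      TensorProduct.map (TensorProduct.map LinearMap.id E2.symm.toLinearMap)
        E3.symm.toLinearMap := rfl
  have hK : Submodule.map (TensorProduct.map (LinearMap.id : A r →ₗ[ℂ] A r)
      E2.symm.toLinearMap) (LinearMap.ker (M2 A mul r s)) =
      LinearMap.ker ((M2 A mul r s).comp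
        (TensorProduct.map LinearMap.id ((f s).toLinearMap ^ r))) := by
    have h1 : Submodule.map (TensorProduct.map (LinearMap.id : A r →ₗ[ℂ] A r)
        E2.symm.toLinearMap) (LinearMap.ker (M2 A mul r s)) =
        Submodule.map ((TensorProduct.congr (LinearEquiv.refl ℂ (A r)) E2).symm).toLinearMap
          (LinearMap.ker (M2 A mul r s)) := rfl
    rw [h1, ← Submodule.comap_equiv_eq_map_symm, ← LinearMap.ker_comp]
    congr 1
    rw [hg]; rfl
  have hT : Submodule.map E3.symm.toLinearMap (⊤ : Submodule ℂ (A t)) = ⊤ := by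
    rw [Submodule.map_top, LinearEquiv.range]
  have hL : Submodule.map (TensorProduct.map E2.symm.toLinearMap E3.symm.toLinearMap)
      (LinearMap.ker (M2 A mul s t)) =
      LinearMap.ker ((M2 A mul s t).comp
        (TensorProduct.map LinearMap.id ((f t).toLinearMap ^ s))) := by
    have h1 : Submodule.map (TensorProduct.map E2.symm.toLinearMap E3.symm.toLinearMap)
        (LinearMap.ker (M2 A mul s t)) =
        Submodule.map ((TensorProduct.congr E2 E3).symm).toLinearMap
          (LinearMap.ker (M2 A mul s t)) := rfl
    rw [h1, ← Submodule.comap_equiv_eq_map_symm]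
    have h2 : (Submodule.comap ((TensorProduct.congr E2 E3) :
        (A s ⊗[ℂ] A t) →ₗ[ℂ] (A s ⊗[ℂ] A t)) (LinearMap.ker (M2 A mul s t))) =
        LinearMap.ker ((M2 A mul s t).comp
          (TensorProduct.map ((f s).toLinearMap ^ r) ((f t).toLinearMap ^ (r + s)))) := by
      rw [← LinearMap.ker_comp]
      congr 1
      rw [hg, hh]; rfl
    rw [h2, ker_twist mul f hf s t hs ht r s]
  have hTr : Submodule.map (LinearMap.id : A r →ₗ[ℂ] A r) (⊤ : Submodule ℂ (A r)) = ⊤ :=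
    Submodule.map_id ⊤
  congr 1
  · rw [hΦsymm, map_range_mapIncl', hK, hT]
  · rw [← Submodule.map_comp, hΦsymm, map_map_comp_assoc_symm_eq, Submodule.map_comp,
      map_range_mapIncl', hTr, hL]
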